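/- Let G be a graph and C a connected component of the reconfiguration graph I^1_AR(G). Let X_1 be the set of vertices v of G with singleton {v} belonging to C, and X_2 = V(G) \ X_1. Then every vertex of X_1 is adjacent in G to every vertex of X_2, every nonempty independent set of G is contained entirely in X_1 or entirely in X_2, and C consists exactly of the nonempty independent sets contained in X_1. -/

import Mathlib

/-- `s` is an independent set of `G`: no two of its vertices are adjacent. -/
def IndepFinset {V : Type*} (G : SimpleGraph V) (s : Finset V) : Prop :=
  ∀ u ∈ s, ∀ v ∈ s, ¬ G.Adj u v

/-- The token jumping reconfiguration graph `I^k_J(G)`: vertices are the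
independent sets of size `k`, two sets being adjacent iff their symmetric
difference has size 2 (one token moves to any other vertex). -/
def tokenJumping {V : Type*} [DecidableEq V] (G : SimpleGraph V) (k : ℕ) :
    SimpleGraph {s : Finset V // IndepFinset G s ∧ s.card = k} where
  Adj I J := (symmDiff I.1 J.1).card = 2
  symm := ⟨fun I J h => by (try simp only at h ⊢); rwa [symmDiff_comm]⟩
  loopless := ⟨fun I h => by simp [symmDiff_self] at h⟩

/-- The token sliding reconfiguration graph `I^k_S(G)`: vertices are the
independent sets of size `k`, two sets being adjacent iff one is obtained from
the other by sliding a token along an edge of `G`. -/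
def tokenSliding {V : Type*} [DecidableEq V] (G : SimpleGraph V) (k : ℕ) :
    SimpleGraph {s : Finset V // IndepFinset G s ∧ s.card = k} where
  Adj I J := ∃ u v : V, G.Adj u v ∧ symmDiff I.1 J.1 = {u, v}
  symm := ⟨fun I J ⟨u, v, ha, hs⟩ =>
    ⟨v, u, ha.symm, by rw [symmDiff_comm, hs, Finset.pair_comm]⟩⟩
  loopless := ⟨fun I ⟨u, v, ha, hs⟩ => by
    simp only [symmDiff_self] at hs
    exact absurd hs.symm (Finset.insert_ne_empty _ _)⟩

/-- The token addition/removal reconfiguration graph `I^k_AR(G)`: vertices are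
the independent sets of size at least `k`, two sets being adjacent iff they
differ by the addition or removal of a single vertex. -/
def tokenAR {V : Type*} [DecidableEq V] (G : SimpleGraph V) (k : ℕ) :
    SimpleGraph {s : Finset V // IndepFinset G s ∧ k ≤ s.card} where
  Adj I J := (symmDiff I.1 J.1).card = 1
  symm := ⟨fun I J h => by (try simp only at h ⊢); rwa [symmDiff_comm]⟩
  loopless := ⟨fun I h => by simp [symmDiff_self] at h⟩

/-- The singleton `{v}` as a vertex of `I^1_AR(G)`. -/
def singletonVertex {V : Type*} [DecidableEq V] (G : SimpleGraph V) (v : V) :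
    {s : Finset V // IndepFinset G s ∧ 1 ≤ s.card} :=
  ⟨{v}, fun a ha b hb => by
    simp only [Finset.mem_singleton] at ha hb
    rw [ha, hb]; exact G.loopless.irrefl v, by simp⟩

lemma reach_singleton_aux {V : Type*} [DecidableEq V] (G : SimpleGraph V) :
    ∀ (n : ℕ) (s : Finset V) (hs : IndepFinset G s) (h1 : 1 ≤ s.card), s.card = n →
    ∀ x ∈ s, (tokenAR G 1).Reachable (singletonVertex G x) ⟨s, hs, h1⟩ := by
  intro n
  induction n with
  | zero => intro s _ h1 hc x _; omega
  | succ n ih =>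
    intro s hs h1 hc x hx
    by_cases h : s = {x}
    · have : singletonVertex G x = (⟨s, hs, h1⟩ : {s : Finset V // IndepFinset G s ∧ 1 ≤ s.card}) :=
        Subtype.ext (by simp [singletonVertex, h])
      rw [← this]
    · obtain ⟨y, hy, hyx⟩ : ∃ y ∈ s, y ≠ x := by
        by_contra h'
        push_neg at h'
        exact h (Finset.eq_singleton_iff_unique_mem.2 ⟨hx, h'⟩)
      have hts : s.erase y ⊆ s := Finset.erase_subset _ _
      have ht : IndepFinset G (s.erase y) := fun a ha b hb => hs a (hts ha) b (hts hb)
      have hxt : x ∈ s.erase y := Finset.mem_erase.2 ⟨fun h' => hyx h'.symm, hx⟩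
      have ht1 : 1 ≤ (s.erase y).card := Finset.card_pos.2 ⟨x, hxt⟩
      have htc : (s.erase y).card = n := by
        rw [Finset.card_erase_of_mem hy]; omega
      have hadj : (tokenAR G 1).Adj ⟨s.erase y, ht, ht1⟩ ⟨s, hs, h1⟩ := by
        show (symmDiff (s.erase y) s).card = 1
        have : symmDiff (s.erase y) s = {y} := by
          ext a
          simp only [Finset.mem_symmDiff, Finset.mem_erase, Finset.mem_singleton]
          constructor
          · rintro (⟨⟨_, ha⟩, hna⟩ | ⟨ha, hna⟩)
            · exact absurd ha hna
            · by_contra hne; exact hna ⟨hne, ha⟩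
          · rintro rfl; exact Or.inr ⟨hy, fun h' => h'.1 rfl⟩
        rw [this]; simp
      exact (ih (s.erase y) ht ht1 htc x hxt).trans hadj.reachable

lemma cc_singleton_mem {V : Type*} [DecidableEq V] (G : SimpleGraph V)
    (I : {s : Finset V // IndepFinset G s ∧ 1 ≤ s.card}) {x : V} (hx : x ∈ I.1) :
    (tokenAR G 1).connectedComponentMk (singletonVertex G x) =
      (tokenAR G 1).connectedComponentMk I := by
  apply SimpleGraph.ConnectedComponent.sound
  have := reach_singleton_aux G I.1.card I.1 I.2.1 I.2.2 rfl x hx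
  convert this

theorem stmt17 {V : Type*} [DecidableEq V] (G : SimpleGraph V)
    (C : (tokenAR G 1).ConnectedComponent)
    (X1 : Set V)
    (hX1 : X1 = {v : V | (tokenAR G 1).connectedComponentMk (singletonVertex G v) = C}) :
    -- every vertex of X1 is adjacent in G to every vertex of X2 = V \ X1
    (∀ v ∈ X1, ∀ w ∉ X1, G.Adj v w) ∧
    -- every nonempty independent set lies entirely in X1 or entirely in X2
    (∀ I : {s : Finset V // IndepFinset G s ∧ 1 ≤ s.card},
      (∀ x ∈ I.1, x ∈ X1) ∨ (∀ x ∈ I.1, x ∉ X1)) ∧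
    -- C consists exactly of the nonempty independent sets contained in X1
    (∀ I : {s : Finset V // IndepFinset G s ∧ 1 ≤ s.card},
      (tokenAR G 1).connectedComponentMk I = C ↔ ∀ x ∈ I.1, x ∈ X1) := by
  subst hX1
  have key : ∀ (I : {s : Finset V // IndepFinset G s ∧ 1 ≤ s.card}) (x : V), x ∈ I.1 →
      (tokenAR G 1).connectedComponentMk (singletonVertex G x) =
        (tokenAR G 1).connectedComponentMk I := fun I x hx => cc_singleton_mem G I hx
  refine ⟨?_, ?_, ?_⟩
  · intro v hv w hw
    by_contra hadj
    have hvw : v ≠ w := fun h => hw (h ▸ hv)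
    have hind : IndepFinset G {v, w} := by
      intro a ha b hb
      simp only [Finset.mem_insert, Finset.mem_singleton] at ha hb
      rcases ha with rfl | rfl <;> rcases hb with rfl | rfl
      · exact G.loopless.irrefl _
      · exact hadj
      · exact fun h => hadj h.symm
      · exact G.loopless.irrefl _
    have hcard : 1 ≤ ({v, w} : Finset V).card := Finset.card_pos.2 ⟨v, by simp⟩
    have h1 := key ⟨{v, w}, hind, hcard⟩ v (by simp)
    have h2 := key ⟨{v, w}, hind, hcard⟩ w (by simp)
    exact hw (by rw [Set.mem_setOf_eq, h2, ← h1, hv])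
  · intro I
    by_cases h : (tokenAR G 1).connectedComponentMk I = C
    · exact Or.inl fun x hx => by rw [Set.mem_setOf_eq, key I x hx, h]
    · exact Or.inr fun x hx hmem => h (by rw [← key I x hx]; exact hmem)
  · intro I
    constructor
    · intro h x hx
      rw [Set.mem_setOf_eq, key I x hx, h]
    · intro h
      obtain ⟨x, hx⟩ := Finset.card_pos.1 I.2.2
      rw [← key I x hx]
      exact h x hx
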